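/- Let k be a number field of degree n = [k:ℚ], let I be a nonzero fractional ideal of k which is not principal, and let x = (x_v)_v be real weights indexed by the infinite places of k satisfying ∏_v e^{x_v} = N(I). Then for every nonzero f ∈ I one has Q_x(f) ≥ n·4^{1/n}. -/

import Mathlib

open NumberField Finset
open scoped Classical

variable (k : Type*) [Field k] [NumberField k]

/-- `Q_x(f) = ∑_{v real} |f|_v² e^{-2 x_v} + 2 ∑_{v complex} |f|_v² e^{-x_v}`. -/
noncomputable def arakelovQ (x : InfinitePlace k → ℝ) (f : k) : ℝ :=
  ∑ v : InfinitePlace k,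
    if v.IsReal then (v f) ^ 2 * Real.exp (-2 * x v)
    else 2 * (v f) ^ 2 * Real.exp (-(x v))

theorem arakelovQ_ge_of_not_principal (I : FractionalIdeal (nonZeroDivisors (𝓞 k)) k)
    (hI : I ≠ 0) (hnp : ¬ (I : Submodule (𝓞 k) k).IsPrincipal)
    (x : InfinitePlace k → ℝ)
    (hx : ∏ v : InfinitePlace k, Real.exp (x v) = (FractionalIdeal.absNorm I : ℝ))
    (f : k) (hfI : f ∈ I) (hf : f ≠ 0) :
    (Module.finrank ℚ k : ℝ) * 4 ^ ((Module.finrank ℚ k : ℝ))⁻¹ ≤ arakelovQ k x f := by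
  have hn0 : 0 < Module.finrank ℚ k := Module.finrank_pos
  set n : ℝ := (Module.finrank ℚ k : ℝ) with hn
  have hnR : (0:ℝ) < n := by rw [hn]; exact_mod_cast hn0
  -- norms
  have hBpos : (0:ℝ) < (FractionalIdeal.absNorm I : ℝ) := by
    have h1 : FractionalIdeal.absNorm I ≠ 0 := fun h =>
      hI (FractionalIdeal.absNorm_eq_zero_iff.mp h)
    have h2 := FractionalIdeal.absNorm_nonneg I
    exact_mod_cast lt_of_le_of_ne h2 (Ne.symm h1)
  -- Step 1: |N f| ≥ 2 N(I)
  have key : (2 : ℝ) * (FractionalIdeal.absNorm I : ℝ) ≤ |(Algebra.norm ℚ f : ℚ)| := by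
    set J := I⁻¹ * FractionalIdeal.spanSingleton (nonZeroDivisors (𝓞 k)) f with hJdef
    have hfle : FractionalIdeal.spanSingleton (nonZeroDivisors (𝓞 k)) f ≤ I :=
      FractionalIdeal.spanSingleton_le_iff_mem.mpr hfI
    have hJ1 : J ≤ 1 := by
      calc J ≤ I⁻¹ * I := mul_right_mono hfle
      _ = 1 := by rw [mul_comm]; exact mul_inv_cancel₀ hI
    obtain ⟨J₀, hJ₀⟩ := FractionalIdeal.le_one_iff_exists_coeIdeal.mp hJ1
    have hJne : J ≠ 0 :=
      mul_ne_zero (inv_ne_zero hI) (FractionalIdeal.spanSingleton_ne_zero_iff.mpr hf)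
    have hJ₀ne : J₀ ≠ ⊥ := by
      rintro rfl
      exact hJne (by simpa using hJ₀.symm)
    have hJ₀top : J₀ ≠ ⊤ := by
      rintro rfl
      apply hnp
      have hJeq : J = 1 := by rw [← hJ₀]; simp
      have hIf : I = FractionalIdeal.spanSingleton (nonZeroDivisors (𝓞 k)) f :=
        (inv_mul_eq_one₀ hI).mp hJeq
      rw [hIf, FractionalIdeal.coe_spanSingleton]
      exact ⟨⟨f, rfl⟩⟩
    have h2 : 2 ≤ Ideal.absNorm J₀ := by
      have ha : Ideal.absNorm J₀ ≠ 0 := by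
        simpa [Ideal.absNorm_eq_zero_iff] using hJ₀ne
      have hb : Ideal.absNorm J₀ ≠ 1 := by
        simpa [Ideal.absNorm_eq_one_iff] using hJ₀top
      omega
    have hJval : FractionalIdeal.absNorm J = (Ideal.absNorm J₀ : ℚ) := by
      rw [← hJ₀, FractionalIdeal.coeIdeal_absNorm]
    have hIJ : I * J = FractionalIdeal.spanSingleton (nonZeroDivisors (𝓞 k)) f := by
      rw [hJdef, ← mul_assoc, mul_inv_cancel₀ hI, one_mul]
    have hnorm : FractionalIdeal.absNorm I * FractionalIdeal.absNorm J
        = |(Algebra.norm ℚ f : ℚ)| := by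
      rw [← map_mul, hIJ, FractionalIdeal.absNorm_span_singleton]
    have h2Q : (2 : ℚ) ≤ FractionalIdeal.absNorm J := by
      rw [hJval]; exact_mod_cast h2
    have hBQ : (0:ℚ) < FractionalIdeal.absNorm I := by exact_mod_cast hBpos
    have : (2 : ℚ) * FractionalIdeal.absNorm I ≤ |(Algebra.norm ℚ f : ℚ)| := by
      rw [← hnorm]
      calc (2:ℚ) * FractionalIdeal.absNorm I
          ≤ FractionalIdeal.absNorm J * FractionalIdeal.absNorm I :=
            mul_le_mul_of_nonneg_right h2Q hBQ.le
        _ = FractionalIdeal.absNorm I * FractionalIdeal.absNorm J := mul_comm _ _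
    exact_mod_cast this
  -- Step 2: AM-GM
  set z : InfinitePlace k → ℝ := fun v =>
    if v.IsReal then (v f) ^ 2 * Real.exp (-2 * x v) else (v f) ^ 2 * Real.exp (-(x v)) with hz
  have hzpos : ∀ v, 0 < z v := by
    intro v
    have hvf : 0 < v f := InfinitePlace.pos_iff.mpr hf
    by_cases h : v.IsReal <;> simp [hz, h] <;> positivity
  set w : InfinitePlace k → ℝ := fun v => (InfinitePlace.mult v : ℝ) / n with hw
  have hsum_mult : ∑ v : InfinitePlace k, (InfinitePlace.mult v : ℝ) = n := by
    rw [hn]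
    exact_mod_cast InfinitePlace.sum_mult_eq (K := k)
  have hw1 : ∑ v : InfinitePlace k, w v = 1 := by
    rw [hw, ← Finset.sum_div, hsum_mult, div_self hnR.ne']
  have hQ : arakelovQ k x f = ∑ v : InfinitePlace k, (InfinitePlace.mult v : ℝ) * z v := by
    unfold arakelovQ
    refine Finset.sum_congr rfl fun v _ => ?_
    by_cases h : v.IsReal <;>
      simp [hz, h, InfinitePlace.mult, Nat.cast_ofNat] <;> ring
  have hAMGM := Real.geom_mean_le_arith_mean_weighted Finset.univ w z
    (fun v _ => by positivity) hw1 (fun v _ => (hzpos v).le)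
  -- LHS of AM-GM
  have hprod : ∏ v : InfinitePlace k, z v ^ w v
      = (∏ v : InfinitePlace k, z v ^ (InfinitePlace.mult v)) ^ (n⁻¹ : ℝ) := by
    rw [← Real.finset_prod_rpow _ _ (fun v _ => by positivity)]
    refine Finset.prod_congr rfl fun v _ => ?_
    show z v ^ ((InfinitePlace.mult v : ℝ) / n) = (z v ^ (InfinitePlace.mult v)) ^ (n⁻¹ : ℝ)
    rw [div_eq_mul_inv, Real.rpow_mul (hzpos v).le, Real.rpow_natCast]
  have hPcalc : ∏ v : InfinitePlace k, z v ^ (InfinitePlace.mult v)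
      = (|(Algebra.norm ℚ f : ℚ)| : ℝ) ^ 2 * (((FractionalIdeal.absNorm I : ℝ)) ^ 2)⁻¹ := by
    have step : ∀ v : InfinitePlace k,
        z v ^ (InfinitePlace.mult v)
          = ((v f) ^ (InfinitePlace.mult v)) ^ 2 * ((Real.exp (x v)) ^ 2)⁻¹ := by
      intro v
      have he : Real.exp (-2 * x v) = ((Real.exp (x v)) ^ 2)⁻¹ := by
        rw [show (-2 : ℝ) * x v = -(x v + x v) by ring, Real.exp_neg, Real.exp_add, sq]
      have he1 : Real.exp (-(x v)) = (Real.exp (x v))⁻¹ := Real.exp_neg _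
      by_cases h : v.IsReal
      · simp only [hz, InfinitePlace.mult, if_pos h, pow_one, he]
      · simp only [hz, InfinitePlace.mult, if_neg h, he1]
        ring
    rw [Finset.prod_congr rfl fun v _ => step v, Finset.prod_mul_distrib,
      Finset.prod_pow, Finset.prod_inv_distrib, Finset.prod_pow,
      InfinitePlace.prod_eq_abs_norm, hx]
    push_cast
    ring
  have hP4 : (4 : ℝ) ≤ ∏ v : InfinitePlace k, z v ^ (InfinitePlace.mult v) := by
    rw [hPcalc]
    have hA : (0:ℝ) ≤ (|(Algebra.norm ℚ f : ℚ)| : ℝ) := by positivity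
    rw [← div_eq_mul_inv, le_div_iff₀ (by positivity), ← Rat.cast_abs]
    have h1 : (2 * (FractionalIdeal.absNorm I : ℝ)) ^ 2 ≤ ((|(Algebra.norm ℚ f : ℚ)| : ℚ) : ℝ) ^ 2 :=
      pow_le_pow_left₀ (by positivity) key 2
    calc (4:ℝ) * (FractionalIdeal.absNorm I : ℝ) ^ 2
        = (2 * (FractionalIdeal.absNorm I : ℝ)) ^ 2 := by ring
      _ ≤ _ := h1
  have hLHS : (4 : ℝ) ^ (n⁻¹ : ℝ) ≤ ∏ v : InfinitePlace k, z v ^ w v := by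
    rw [hprod]
    exact Real.rpow_le_rpow (by norm_num) hP4 (by positivity)
  have hRHS : ∑ v : InfinitePlace k, w v * z v = arakelovQ k x f / n := by
    rw [hQ, Finset.sum_div]
    refine Finset.sum_congr rfl fun v _ => ?_
    rw [hw]
    ring
  have : (4 : ℝ) ^ (n⁻¹ : ℝ) ≤ arakelovQ k x f / n := by
    calc (4 : ℝ) ^ (n⁻¹ : ℝ) ≤ ∏ v : InfinitePlace k, z v ^ w v := hLHS
      _ ≤ ∑ v : InfinitePlace k, w v * z v := hAMGM
      _ = arakelovQ k x f / n := hRHS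
  calc n * 4 ^ (n⁻¹ : ℝ) ≤ n * (arakelovQ k x f / n) := by
        exact mul_le_mul_of_nonneg_left this hnR.le
    _ = arakelovQ k x f := by field_simp
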